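/- For a closed interval X = [a, b] ⊂ ℝ with a < b, with the Euclidean distance scaled by R > 0, the magnitude function satisfies M_X(R) = (b - a)/2 · R + 1. Equivalently, the measure μ_R = (R/2)·Leb|_{[a,b]} + (1/2)(δ_a + δ_b) satisfies ∫ e^{-R|x-y|} dμ_R(y) = 1 for all x ∈ [a,b], and μ_R([a,b]) = (b-a)R/2 + 1. -/

import Mathlib

open MeasureTheory

theorem magnitude_interval (a b R : ℝ) (hab : a < b) (hR : 0 < R) :
    let μ : Measure ℝ :=
      ENNReal.ofReal (R / 2) • volume.restrict (Set.Icc a b) +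
        ENNReal.ofReal (1 / 2) • (Measure.dirac a + Measure.dirac b)
    (∀ x ∈ Set.Icc a b, ∫ y, Real.exp (-R * |x - y|) ∂μ = 1) ∧
      (μ (Set.Icc a b)).toReal = (b - a) * R / 2 + 1 := by
  intro μ
  constructor
  · intro x hx
    obtain ⟨hax, hxb⟩ := hx
    have hR' : R ≠ 0 := hR.ne'
    set f : ℝ → ℝ := fun y => Real.exp (-R * |x - y|) with hf
    have hfc : Continuous f := by
      have : Continuous fun y : ℝ => -R * |x - y| := by continuity
      exact Real.continuous_exp.comp this
    have hfb : ∀ y, ‖f y‖ ≤ 1 := by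
      intro y
      rw [Real.norm_eq_abs, abs_of_pos (Real.exp_pos _)]
      apply Real.exp_le_one_iff.mpr
      have : 0 ≤ R * |x - y| := mul_nonneg hR.le (abs_nonneg _)
      linarith
    have hint1 : Integrable f (volume.restrict (Set.Icc a b)) :=
      hfc.integrableOn_Icc
    have hintd : ∀ c : ℝ, Integrable f (Measure.dirac c) := fun c =>
      Integrable.mono' (integrable_const 1) hfc.aestronglyMeasurable
        (Filter.Eventually.of_forall hfb)
    -- split the integral
    have hsplit : ∫ y, f y ∂μ =
        (R / 2) * (∫ y in Set.Icc a b, f y) + (1 / 2) * (f a + f b) := by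
      rw [integral_add_measure (hint1.smul_measure ENNReal.ofReal_ne_top)
        (((hintd a).add_measure (hintd b)).smul_measure ENNReal.ofReal_ne_top),
        integral_smul_measure, integral_smul_measure,
        integral_add_measure (hintd a) (hintd b),
        integral_dirac, integral_dirac,
        ENNReal.toReal_ofReal (by positivity), ENNReal.toReal_ofReal (by norm_num)]
      simp only [smul_eq_mul]
    -- compute interval integral
    set A := Real.exp (-R * (x - a)) with hA
    set B := Real.exp (-R * (b - x)) with hB
    have hI : ∫ y in Set.Icc a b, f y = (1 - A) / R + (1 - B) / R := by
      rw [integral_Icc_eq_integral_Ioc, ← intervalIntegral.integral_of_le hab.le,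
        ← intervalIntegral.integral_add_adjacent_intervals (b := x)
          (hfc.intervalIntegrable a x) (hfc.intervalIntegrable x b)]
      have h1 : ∫ y in a..x, f y = (1 - A) / R := by
        have : ∀ y ∈ Set.uIcc a x, f y = Real.exp (R * y + (-R * x)) := by
          intro y hy
          rw [Set.uIcc_of_le hax] at hy
          have : |x - y| = x - y := abs_of_nonneg (by linarith [hy.2])
          simp only [hf, this]
          ring_nf
        rw [intervalIntegral.integral_congr this,
          intervalIntegral.integral_comp_mul_add Real.exp hR.ne' (-R * x),
          integral_exp]
        have e1 : R * x + -R * x = 0 := by ring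
        have e2 : R * a + -R * x = -R * (x - a) := by ring
        rw [e1, e2, Real.exp_zero, ← hA, smul_eq_mul]
        field_simp
      have h2 : ∫ y in x..b, f y = (1 - B) / R := by
        have : ∀ y ∈ Set.uIcc x b, f y = Real.exp (-R * y + R * x) := by
          intro y hy
          rw [Set.uIcc_of_le hxb] at hy
          have : |x - y| = y - x := by
            rw [abs_sub_comm]; exact abs_of_nonneg (by linarith [hy.1])
          simp only [hf, this]
          ring_nf
        rw [intervalIntegral.integral_congr this,
          intervalIntegral.integral_comp_mul_add Real.exp (neg_ne_zero.mpr hR.ne') (R * x),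
          integral_exp]
        have e1 : -R * x + R * x = 0 := by ring
        have e2 : -R * b + R * x = -R * (b - x) := by ring
        rw [e1, e2, Real.exp_zero, ← hB, smul_eq_mul]
        field_simp
        ring
      rw [h1, h2]
    have hfa : f a = A := by
      simp only [hf, hA, abs_of_nonneg (by linarith : (0:ℝ) ≤ x - a)]
    have hfbb : f b = B := by
      simp only [hf, hB]
      rw [abs_sub_comm, abs_of_nonneg (by linarith : (0:ℝ) ≤ b - x)]
    rw [hsplit, hI, hfa, hfbb]
    field_simp
    ring
  · have h1 : μ (Set.Icc a b) = ENNReal.ofReal (R / 2) * ENNReal.ofReal (b - a) +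
        ENNReal.ofReal (1 / 2) * 2 := by
      simp only [μ, Measure.add_apply, Measure.smul_apply, smul_eq_mul,
        Measure.restrict_apply measurableSet_Icc, Set.inter_self, Real.volume_Icc,
        Measure.dirac_apply' _ measurableSet_Icc,
        Set.indicator_of_mem (Set.left_mem_Icc.mpr hab.le),
        Set.indicator_of_mem (Set.right_mem_Icc.mpr hab.le), Pi.one_apply, hab.le, le_refl]
      ring
    have hx : (0:ℝ) ≤ R / 2 * (b - a) := mul_nonneg (by positivity) (by linarith)
    rw [h1, ← ENNReal.ofReal_mul (by positivity), ← ENNReal.ofReal_ofNat 2,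
      ← ENNReal.ofReal_mul (by norm_num),
      ← ENNReal.ofReal_add hx (by norm_num),
      ENNReal.toReal_ofReal (add_nonneg hx (by norm_num))]
    ring
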